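/- The number of ordered pairs (f, g) of coprime polynomials in F_q[t] with max(deg f, deg g) = r is (q-1)(q^{2r+1} - q^{2r-1}) for r ≥ 1. -/

import Mathlib

open Polynomial

namespace Stmt15Aux

variable {F : Type} [Field F] [Fintype F]

noncomputable def degLTEquiv (F : Type) [Field F] (n : ℕ) :
    {p : F[X] // p.degree < (n : ℕ)} ≃ (Fin n → F) :=
  (Equiv.subtypeEquivRight (fun _ => (Polynomial.mem_degreeLT).symm)).trans
    (Polynomial.degreeLTEquiv F n).toEquiv

instance degLT_finite (n : ℕ) : Finite {p : F[X] // p.degree < (n : ℕ)} :=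
  Finite.of_equiv _ (degLTEquiv F n).symm

lemma card_degLT (n : ℕ) :
    Nat.card {p : F[X] // p.degree < (n : ℕ)} = Fintype.card F ^ n := by
  rw [Nat.card_congr (degLTEquiv F n)]
  simp [Nat.card_eq_fintype_card]

lemma wb_lt_succ (x : WithBot ℕ) (n : ℕ) :
    x < ((n + 1 : ℕ) : WithBot ℕ) ↔ x ≤ (n : WithBot ℕ) := by
  cases x with
  | bot => exact iff_of_true (by exact_mod_cast WithBot.bot_lt_coe (n+1)) bot_le
  | coe m =>
    simp only [Nat.cast_withBot, WithBot.coe_lt_coe, WithBot.coe_le_coe]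
    exact Nat.lt_succ_iff

/-- pairs with max degree < n -/
def maxLTEquiv (F : Type) [Field F] (n : ℕ) :
    {p : F[X] × F[X] // max p.1.degree p.2.degree < (n : ℕ)} ≃
      {p : F[X] // p.degree < (n : ℕ)} × {p : F[X] // p.degree < (n : ℕ)} where
  toFun p := (⟨p.1.1, (max_lt_iff.mp p.2).1⟩, ⟨p.1.2, (max_lt_iff.mp p.2).2⟩)
  invFun x := ⟨(x.1.1, x.2.1), max_lt_iff.mpr ⟨x.1.2, x.2.2⟩⟩
  left_inv p := rfl
  right_inv x := rfl

instance maxLT_finite (n : ℕ) :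
    Finite {p : F[X] × F[X] // max p.1.degree p.2.degree < (n : ℕ)} :=
  Finite.of_equiv _ (maxLTEquiv F n).symm

lemma card_maxLT (n : ℕ) :
    Nat.card {p : F[X] × F[X] // max p.1.degree p.2.degree < (n : ℕ)}
      = Fintype.card F ^ (2 * n) := by
  rw [Nat.card_congr (maxLTEquiv F n), Nat.card_prod, card_degLT, ← pow_add, ← two_mul]

instance maxEq_finite (n : ℕ) :
    Finite {p : F[X] × F[X] // max p.1.degree p.2.degree = (n : ℕ)} := by
  apply Finite.of_injective
    (fun p => (⟨p.1, by rw [wb_lt_succ, p.2]⟩ :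
      {p : F[X] × F[X] // max p.1.degree p.2.degree < ((n + 1 : ℕ) : WithBot ℕ)}))
  intro a b h
  simp only [Subtype.mk.injEq] at h
  exact Subtype.ext h

instance cop_finite (n : ℕ) :
    Finite {p : F[X] × F[X] //
      IsCoprime p.1 p.2 ∧ max p.1.degree p.2.degree = (n : WithBot ℕ)} := by
  apply Finite.of_injective
    (fun p => (⟨p.1, by rw [wb_lt_succ, p.2.2]⟩ :
      {p : F[X] × F[X] // max p.1.degree p.2.degree < ((n + 1 : ℕ) : WithBot ℕ)}))
  intro a b h
  simp only [Subtype.mk.injEq] at h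
  exact Subtype.ext h

/-- split: card {max < n+1} = card {max < n} + card {max = n} -/
lemma card_split (n : ℕ) :
    Fintype.card F ^ (2 * (n + 1)) = Fintype.card F ^ (2 * n)
      + Nat.card {p : F[X] × F[X] // max p.1.degree p.2.degree = (n : WithBot ℕ)} := by
  rw [← card_maxLT (F := F) (n + 1), ← card_maxLT (F := F) n, ← Nat.card_sum]
  apply Nat.card_congr
  apply (Equiv.subtypeEquivRight (q := fun p : F[X] × F[X] =>
      max p.1.degree p.2.degree < (n : ℕ) ∨ max p.1.degree p.2.degree = (n : ℕ)) ?_).trans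
  · exact subtypeOrEquiv _ _ (by
      intro P h1 h2 x hx
      exact absurd ((h2 x hx).symm.trans_lt (h1 x hx)) (lt_irrefl _))
  · intro p
    rw [wb_lt_succ, le_iff_lt_or_eq]

/-- monic polynomials of natDegree d ≃ polynomials of degree < d -/
noncomputable def monicEquiv (F : Type) [Field F] (d : ℕ) :
    {h : F[X] // h.Monic ∧ h.natDegree = d} ≃ {p : F[X] // p.degree < (d : ℕ)} where
  toFun h := ⟨h.1 - X ^ d, by
    have h1 : h.1.degree = ((d : ℕ) : WithBot ℕ) := by
      rw [degree_eq_natDegree h.2.1.ne_zero, h.2.2]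
    have := Polynomial.degree_sub_lt
      (h1.trans (degree_X_pow d).symm) h.2.1.ne_zero
      (by rw [h.2.1.leadingCoeff, (monic_X_pow d).leadingCoeff])
    rwa [h1] at this⟩
  invFun p := ⟨X ^ d + p.1, by
    have hm : (X ^ d + p.1).Monic :=
      (monic_X_pow d).add_of_left (by rw [degree_X_pow]; exact p.2)
    refine ⟨hm, ?_⟩
    have : (X ^ d + p.1).degree = ((d : ℕ) : WithBot ℕ) := by
      rw [degree_add_eq_left_of_degree_lt (by rw [degree_X_pow]; exact p.2), degree_X_pow]
    exact natDegree_eq_of_degree_eq_some this⟩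
  left_inv h := Subtype.ext (by ring)
  right_inv p := Subtype.ext (by ring)

instance monic_finite (d : ℕ) : Finite {h : F[X] // h.Monic ∧ h.natDegree = d} :=
  Finite.of_equiv _ (monicEquiv F d).symm

lemma card_monic (d : ℕ) :
    Nat.card {h : F[X] // h.Monic ∧ h.natDegree = d} = Fintype.card F ^ d := by
  rw [Nat.card_congr (monicEquiv F d), card_degLT]

lemma wb_cancel {d r : ℕ} {x : WithBot ℕ} (h : (d : WithBot ℕ) + x = (r : WithBot ℕ)) :
    x = ((r - d : ℕ) : WithBot ℕ) ∧ d ≤ r := by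
  cases x with
  | bot => simp at h
  | coe n =>
    have h2 : ((d + n : ℕ) : WithBot ℕ) = ((r : ℕ) : WithBot ℕ) := by push_cast; exact h
    have h3 : d + n = r := by exact_mod_cast h2
    constructor
    · have : n = r - d := by omega
      rw [this]; rfl
    · omega

lemma natcard_sigma {n : ℕ} (β : Fin n → Type) [∀ i, Finite (β i)] :
    Nat.card ((i : Fin n) × β i) = ∑ i, Nat.card (β i) := by
  letI : ∀ i, Fintype (β i) := fun i => Fintype.ofFinite _
  simp [Nat.card_eq_fintype_card]

lemma maxdeg_mul (h f g : F[X]) :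
    max (h * f).degree (h * g).degree = h.degree + max f.degree g.degree := by
  rw [degree_mul, degree_mul]
  have hmono : Monotone (fun x : WithBot ℕ => h.degree + x) :=
    fun x y hxy => add_le_add_right hxy h.degree
  exact hmono.map_max.symm

lemma card_decomp (r : ℕ) :
    Nat.card {p : F[X] × F[X] // max p.1.degree p.2.degree = (r : WithBot ℕ)}
      = ∑ d ∈ Finset.range (r + 1), Fintype.card F ^ d *
          Nat.card {p : F[X] × F[X] //
            IsCoprime p.1 p.2 ∧ max p.1.degree p.2.degree = ((r - d : ℕ) : WithBot ℕ)} := by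
  classical
  set Φ : ((d : Fin (r + 1)) ×
      ({h : F[X] // h.Monic ∧ h.natDegree = (d : ℕ)} ×
      {p : F[X] × F[X] // IsCoprime p.1 p.2 ∧
        max p.1.degree p.2.degree = ((r - (d : ℕ) : ℕ) : WithBot ℕ)})) →
      {p : F[X] × F[X] // max p.1.degree p.2.degree = (r : WithBot ℕ)} := fun x =>
    ⟨(x.2.1.1 * x.2.2.1.1, x.2.1.1 * x.2.2.1.2), by
      obtain ⟨d, ⟨h, hm, hd⟩, ⟨⟨f₁, g₁⟩, hc, hx⟩⟩ := x
      simp only [maxdeg_mul]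
      rw [hx, degree_eq_natDegree hm.ne_zero, hd, ← Nat.cast_add]
      congr 1
      have : (d : ℕ) < r + 1 := d.2
      omega⟩ with hΦ
  have key : ∀ (h f₁ g₁ : F[X]), h.Monic → IsCoprime f₁ g₁ → gcd (h * f₁) (h * g₁) = h := by
    intro h f₁ g₁ hm hc
    rw [gcd_mul_left, hm.normalize_eq_self]
    have h1 : gcd f₁ g₁ = 1 := by
      rw [← normalize_gcd]; exact normalize_eq_one.mpr ((gcd_isUnit_iff _ _).mpr hc)
    rw [h1, mul_one]
  have Φinj : Function.Injective Φ := by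
    rintro ⟨d1, ⟨h1, hm1, hd1⟩, ⟨⟨f1, g1⟩, hc1, hx1⟩⟩ ⟨d2, ⟨h2, hm2, hd2⟩, ⟨⟨f2, g2⟩, hc2, hx2⟩⟩ heq
    simp only [hΦ, Subtype.mk.injEq, Prod.mk.injEq] at heq
    obtain ⟨e1, e2⟩ := heq
    have hh : h1 = h2 := by rw [← key h1 f1 g1 hm1 hc1, ← key h2 f2 g2 hm2 hc2, e1, e2]
    have hd : d1 = d2 := Fin.ext (by rw [← hd1, ← hd2, hh])
    subst hd
    subst hh
    have hf : f1 = f2 := mul_left_cancel₀ hm1.ne_zero e1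
    have hg : g1 = g2 := mul_left_cancel₀ hm1.ne_zero e2
    subst hf
    subst hg
    rfl
  have Φsurj : Function.Surjective Φ := by
    rintro ⟨⟨f, g⟩, hmax⟩
    have hne : ¬(f = 0 ∧ g = 0) := by
      rintro ⟨rfl, rfl⟩
      simp only [degree_zero, max_self] at hmax
      exact absurd hmax.symm (by exact_mod_cast WithBot.coe_ne_bot)
    have h0 : gcd f g ≠ 0 := by
      rcases not_and_or.mp hne with hf | hg
      · exact gcd_ne_zero_of_left hf
      · exact gcd_ne_zero_of_right hg
    have hmonic : (gcd f g).Monic := by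
      have := Polynomial.monic_normalize (p := gcd f g) h0
      rwa [normalize_gcd] at this
    have hf : gcd f g * (f / gcd f g) = f :=
      EuclideanDomain.mul_div_cancel' h0 (gcd_dvd_left f g)
    have hg : gcd f g * (g / gcd f g) = g :=
      EuclideanDomain.mul_div_cancel' h0 (gcd_dvd_right f g)
    have hcop : IsCoprime (f / gcd f g) (g / gcd f g) := by
      rcases not_and_or.mp hne with hf0 | hg0
      · have := isCoprime_div_gcd_div_gcd (p := g) (q := f) hf0
        rw [gcd_comm g f] at this
        exact this.symm
      · exact isCoprime_div_gcd_div_gcd hg0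
    have hdegsum : ((gcd f g).natDegree : WithBot ℕ)
        + max (f / gcd f g).degree (g / gcd f g).degree = (r : WithBot ℕ) := by
      rw [← degree_eq_natDegree hmonic.ne_zero, ← maxdeg_mul, hf, hg]
      exact hmax
    obtain ⟨hx, hdr⟩ := wb_cancel hdegsum
    refine ⟨⟨⟨(gcd f g).natDegree, by omega⟩, ⟨⟨gcd f g, hmonic, rfl⟩,
      ⟨(f / gcd f g, g / gcd f g), hcop, hx⟩⟩⟩, ?_⟩
    exact Subtype.ext (Prod.ext hf hg)
  rw [Nat.card_congr (Equiv.ofBijective Φ ⟨Φinj, Φsurj⟩).symm, natcard_sigma]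
  rw [← Fin.sum_univ_eq_sum_range (fun d => Fintype.card F ^ d *
      Nat.card {p : F[X] × F[X] //
        IsCoprime p.1 p.2 ∧ max p.1.degree p.2.degree = ((r - d : ℕ) : WithBot ℕ)}) (r + 1)]
  refine Finset.sum_congr rfl fun d _ => ?_
  rw [Nat.card_prod, card_monic]

end Stmt15Aux

theorem stmt_15 (Fq : Type) [Field Fq] [Fintype Fq] (q : ℕ) (hq : Fintype.card Fq = q)
    (r : ℕ) (hr : 1 ≤ r) :
    Nat.card {p : Polynomial Fq × Polynomial Fq //
        IsCoprime p.1 p.2 ∧ max p.1.degree p.2.degree = (r : WithBot ℕ)}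
      = (q - 1) * (q ^ (2 * r + 1) - q ^ (2 * r - 1)) := by
  classical
  subst hq
  obtain ⟨m, rfl⟩ : ∃ m, r = m + 1 := ⟨r - 1, by omega⟩
  have e1 := Stmt15Aux.card_split (F := Fq) (m + 1)
  have e2 := Stmt15Aux.card_split (F := Fq) m
  have e3 := Stmt15Aux.card_decomp (F := Fq) (m + 1)
  have e4 := Stmt15Aux.card_decomp (F := Fq) m
  -- notation
  have e5 : Nat.card {p : Polynomial Fq × Polynomial Fq //
        max p.1.degree p.2.degree = ((m + 1 : ℕ) : WithBot ℕ)}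
      = Nat.card {p : Polynomial Fq × Polynomial Fq //
          IsCoprime p.1 p.2 ∧ max p.1.degree p.2.degree = ((m + 1 : ℕ) : WithBot ℕ)}
        + Fintype.card Fq * Nat.card {p : Polynomial Fq × Polynomial Fq //
            max p.1.degree p.2.degree = ((m : ℕ) : WithBot ℕ)} := by
    rw [e3, Finset.sum_range_succ']
    simp only [pow_zero, one_mul, Nat.sub_zero, Nat.succ_sub_succ]
    rw [add_comm]
    congr 1
    rw [e4, Finset.mul_sum]
    refine Finset.sum_congr rfl fun i _ => ?_
    ring
  have hq1 : 1 ≤ Fintype.card Fq := Fintype.card_pos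
  have hle : Fintype.card Fq ^ (2 * m + 1) ≤ Fintype.card Fq ^ (2 * m + 3) :=
    Nat.pow_le_pow_right hq1 (by omega)
  have hA : 2 * (m + 1 + 1) = 2 * m + 4 := by omega
  have hB : 2 * (m + 1) = 2 * m + 2 := by omega
  have hC : 2 * (m + 1) + 1 = 2 * m + 3 := by omega
  have hD : 2 * (m + 1) - 1 = 2 * m + 1 := by omega
  rw [hA] at e1
  rw [hB] at e1 e2
  rw [hC, hD]
  zify [hle, hq1]
  zify at e1 e2 e5
  linear_combination (-1 : ℤ) * e1 + (Fintype.card Fq : ℤ) * e2 - e5
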